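/- (Turnpike theorem.) Fix T > 0 and α ∈ (0, T/2). For every ε > 0 there exist Λ₀ > 0 and δ > 0 such that the following holds: if Λ ≥ Λ₀, if A, B : [0,T] → ℝ are continuous functions satisfying |A(t)/Λ − 1| ≤ δ and |B(t)/Λ − 1| ≤ δ for all t ∈ [0, T−α], and if f₁ : [0,T] → ℝ is differentiable with f₁(0) ∈ [0,1] and f₁'(t) = A(t)(1 − f₁(t)) − B(t) f₁(t) for all t ∈ [0, T−α], then | f₁(t) − 1/2 | < ε for all t ∈ [α, T−α]. -/

import Mathlib

set_option maxHeartbeats 1600000 in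
/-- Turnpike theorem: if the rates `A, B` are both uniformly close to a large
constant `Λ` on `[0, T−α]`, then the solution of `f₁' = A(1−f₁) − B f₁` with
`f₁(0) ∈ [0,1]` is within `ε` of `1/2` on `[α, T−α]`. -/
theorem stmt_12 (T α : ℝ) (hT : 0 < T) (hα : α ∈ Set.Ioo 0 (T / 2)) :
    ∀ ε > (0 : ℝ), ∃ Λ₀ > (0 : ℝ), ∃ δ > (0 : ℝ), ∀ Λ : ℝ, Λ₀ ≤ Λ →
      ∀ A B : ℝ → ℝ,
        ContinuousOn A (Set.Icc 0 T) → ContinuousOn B (Set.Icc 0 T) →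
        (∀ t ∈ Set.Icc (0 : ℝ) (T - α), |A t / Λ - 1| ≤ δ) →
        (∀ t ∈ Set.Icc (0 : ℝ) (T - α), |B t / Λ - 1| ≤ δ) →
        ∀ f₁ : ℝ → ℝ, f₁ 0 ∈ Set.Icc (0 : ℝ) 1 →
          (∀ t ∈ Set.Icc (0 : ℝ) (T - α),
            HasDerivAt f₁ (A t * (1 - f₁ t) - B t * f₁ t) t) →
          ∀ t ∈ Set.Icc α (T - α), |f₁ t - 1 / 2| < ε := by
  obtain ⟨hα0, hα2⟩ := hα
  intro ε hε
  set η : ℝ := min ε 1 / 2 with hη_def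
  have hη0 : 0 < η := by positivity
  have hη1 : η ≤ 1 / 2 := by
    have : min ε 1 ≤ 1 := min_le_right _ _
    simp only [hη_def]; linarith
  have hηε : 2 * η ≤ ε := by
    have : min ε 1 ≤ ε := min_le_left _ _
    simp only [hη_def]; linarith
  set δ : ℝ := η / 2 with hδ_def
  have hδ0 : 0 < δ := by positivity
  have hδ4 : δ ≤ 1 / 4 := by simp only [hδ_def]; linarith
  refine ⟨max 1 (Real.log (2 / η) / α), by positivity, δ, hδ0, ?_⟩
  intro Λ hΛ A B hAc hBc hAΛ hBΛ f₁ hf0 hf'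
  have hΛ1 : (1 : ℝ) ≤ Λ := le_trans (le_max_left _ _) hΛ
  have hΛ0 : (0 : ℝ) < Λ := by linarith
  set k : ℝ := 2 * Λ * (1 - δ) with hk_def
  have hk0 : 0 < k := by
    have : (0:ℝ) < 1 - δ := by linarith
    positivity
  have hkΛ : Λ ≤ k := by nlinarith
  -- bounds on A and B
  have rate_bounds : ∀ g : ℝ → ℝ, (∀ t ∈ Set.Icc (0 : ℝ) (T - α), |g t / Λ - 1| ≤ δ) →
      ∀ t ∈ Set.Icc (0 : ℝ) (T - α), Λ * (1 - δ) ≤ g t ∧ g t ≤ Λ * (1 + δ) := by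
    intro g hg t ht
    have h := abs_le.1 (hg t ht)
    have h1 : (1 - δ) ≤ g t / Λ := by linarith [h.1]
    have h2 : g t / Λ ≤ 1 + δ := by linarith [h.2]
    constructor
    · calc Λ * (1 - δ) ≤ Λ * (g t / Λ) := by nlinarith
        _ = g t := by field_simp
    · calc g t = Λ * (g t / Λ) := by field_simp
        _ ≤ Λ * (1 + δ) := by nlinarith
  have hAb := rate_bounds A hAΛ
  have hBb := rate_bounds B hBΛ
  have hTα : (0 : ℝ) ≤ T - α := by linarith
  -- continuity of f₁ on [0, T-α]
  have hfc : ContinuousOn f₁ (Set.Icc 0 (T - α)) := fun t ht =>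
    (hf' t ht).continuousAt.continuousWithinAt
  have hfd : ∀ x ∈ Set.Ico (0 : ℝ) (T - α),
      HasDerivWithinAt f₁ (A x * (1 - f₁ x) - B x * f₁ x) (Set.Ici x) x := fun x hx =>
    (hf' x (Set.mem_Icc.2 ⟨hx.1, le_of_lt hx.2⟩)).hasDerivWithinAt
  -- the barrier
  have hBarDeriv : ∀ x : ℝ, HasDerivAt (fun t => Real.exp (-(k * t))) (-k * Real.exp (-(k * x))) x := by
    intro x
    have h1 : HasDerivAt (fun t : ℝ => -(k * t)) (-k) x := by
      simpa using ((hasDerivAt_id x).const_mul k).fun_neg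
    simpa [mul_comm] using h1.exp
  -- upper bound: f₁ t ≤ 1/2 + η + exp(-(k t)) on [0, T-α]
  have upper : ∀ t ∈ Set.Icc (0 : ℝ) (T - α), f₁ t ≤ 1 / 2 + η + Real.exp (-(k * t)) := by
    refine image_le_of_deriv_right_lt_deriv_boundary hfc hfd ?_
      (fun x => ((hBarDeriv x).const_add (1 / 2 + η))) ?_
    · simp only [mul_zero, neg_zero, Real.exp_zero]
      linarith [hf0.2]
    · intro x hx heq
      have hx' : x ∈ Set.Icc (0 : ℝ) (T - α) := Set.mem_Icc.2 ⟨hx.1, le_of_lt hx.2⟩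
      obtain ⟨hA1, hA2⟩ := hAb x hx'
      obtain ⟨hB1, hB2⟩ := hBb x hx'
      have hE : 0 < Real.exp (-(k * x)) := Real.exp_pos _
      rw [heq]
      have hk' : k = 2 * Λ * (1 - δ) := hk_def
      have hδη : δ = η / 2 := hδ_def
      nlinarith [Real.exp_pos (-(k * x)), mul_pos hΛ0 hη0,
        mul_pos (mul_pos hΛ0 hη0) hE]
  -- lower bound: f₁ t ≥ 1/2 - η - exp(-(k t)) on [0, T-α]
  have lower : ∀ t ∈ Set.Icc (0 : ℝ) (T - α), -(f₁ t) ≤ -(1 / 2) + η + Real.exp (-(k * t)) := by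
    refine image_le_of_deriv_right_lt_deriv_boundary (hfc.neg)
      (fun x hx => ((hfd x hx).neg)) ?_
      (fun x => ((hBarDeriv x).const_add (-(1 / 2) + η))) ?_
    · simp only [mul_zero, neg_zero, Real.exp_zero]
      linarith [hf0.1, (Pi.neg_apply f₁ 0 : (-f₁) 0 = -(f₁ 0))]
    · intro x hx heq
      have hx' : x ∈ Set.Icc (0 : ℝ) (T - α) := Set.mem_Icc.2 ⟨hx.1, le_of_lt hx.2⟩
      obtain ⟨hA1, hA2⟩ := hAb x hx'
      obtain ⟨hB1, hB2⟩ := hBb x hx'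
      have hE : 0 < Real.exp (-(k * x)) := Real.exp_pos _
      have heq' : -(f₁ x) = -(1 / 2) + η + Real.exp (-(k * x)) := heq
      have hfx : f₁ x = 1 / 2 - η - Real.exp (-(k * x)) := by linarith
      show -(A x * (1 - f₁ x) - B x * f₁ x) < -k * Real.exp (-(k * x))
      rw [hfx]
      nlinarith [mul_pos hΛ0 hη0, mul_pos (mul_pos hΛ0 hη0) hη0,
        mul_nonneg (by linarith : (0:ℝ) ≤ A x + B x - k) hE.le]
  -- conclusion
  intro t ht
  obtain ⟨ht1, ht2⟩ := ht
  have ht' : t ∈ Set.Icc (0 : ℝ) (T - α) := ⟨by linarith, ht2⟩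
  have hu := upper t ht'
  have hl := lower t ht'
  have hexp : Real.exp (-(k * t)) ≤ η / 2 := by
    have h1 : Real.log (2 / η) / α ≤ Λ := le_trans (le_max_right _ _) hΛ
    have h2 : Real.log (2 / η) ≤ Λ * α := by
      rw [div_le_iff₀ hα0] at h1; linarith
    have h3 : Λ * α ≤ k * t :=
      le_trans (mul_le_mul_of_nonneg_right hkΛ hα0.le)
        (mul_le_mul_of_nonneg_left ht1 hk0.le)
    have h4 : Real.exp (-(k * t)) ≤ Real.exp (-Real.log (2 / η)) := by
      apply Real.exp_le_exp.2; linarith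
    have h5 : Real.exp (-Real.log (2 / η)) = η / 2 := by
      rw [Real.exp_neg, Real.exp_log (by positivity : (0:ℝ) < 2 / η)]
      field_simp
    linarith
  rw [abs_lt]
  constructor <;> nlinarith [Real.exp_pos (-(k * t))]
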